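/- Let $y_1, y_2, \ldots$ be i.i.d. random variables under $\Pi$, $S_n = \sum_{i=n-m+1}^n y_i$, and $T_F(h) = \inf\{n \geq m : S_n \geq h\}$. Then the worst-case false alarm probability is bounded as $\sup_{l \geq 1} \Pi(l \leq T_F(h) < l + m_\alpha) \leq 1 - [\Pi(S_m < h)]^{m_\alpha}$. -/

import Mathlib

open MeasureTheory ProbabilityTheory

/-- Moving sum `S n = ∑_{i=n-m+1}^n y i`. -/
noncomputable def movSum {Ω : Type*} (m : ℕ) (y : ℕ → Ω → ℝ) (n : ℕ) (ω : Ω) : ℝ :=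
  ∑ i ∈ Finset.Icc (n + 1 - m) n, y i ω

/-- FMA stopping time `T_F(h) = inf {n ≥ m : S_n ≥ h}` (equal to `⊤` if no such `n`). -/
noncomputable def fmaTime {Ω : Type*} (m : ℕ) (y : ℕ → Ω → ℝ) (h : ℝ) (ω : Ω) : ℕ∞ :=
  sInf ((fun n : ℕ => (n : ℕ∞)) '' {n : ℕ | m ≤ n ∧ h ≤ movSum m y n ω})

open ENNReal

lemma harris_key {a b c d : ℝ≥0∞} (hca : c ≤ a) (hdb : d ≤ b) :
    a * d + c * b ≤ a * b + c * d := by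
  have hb : d + (b - d) = b := add_tsub_cancel_of_le hdb
  calc a * d + c * b = a * d + (c * d + c * (b - d)) := by rw [← mul_add, hb]
    _ ≤ a * d + (c * d + a * (b - d)) := by gcongr
    _ = a * d + a * (b - d) + c * d := by ring
    _ = a * b + c * d := by rw [← mul_add, hb]

lemma harris_one (ν : Measure ℝ) [IsProbabilityMeasure ν] {F G : ℝ → ℝ≥0∞}
    (hF : Antitone F) (hG : Antitone G) (hFm : Measurable F) (hGm : Measurable G) :
    (∫⁻ x, F x ∂ν) * (∫⁻ x, G x ∂ν) ≤ ∫⁻ x, F x * G x ∂ν := by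
  set P := ν.prod ν
  have key : ∀ z : ℝ × ℝ, F z.1 * G z.2 + F z.2 * G z.1 ≤ F z.1 * G z.1 + F z.2 * G z.2 := by
    rintro ⟨x, y⟩
    rcases le_total x y with hxy | hxy
    · exact harris_key (hF hxy) (hG hxy)
    · have := harris_key (hF hxy) (hG hxy)
      dsimp only at this ⊢
      calc F x * G y + F y * G x = F y * G x + F x * G y := by ring
        _ ≤ F y * G y + F x * G x := this
        _ = F x * G x + F y * G y := by ring
  have m1 : Measurable fun z : ℝ × ℝ => F z.1 * G z.2 :=
    (hFm.comp measurable_fst).mul (hGm.comp measurable_snd)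
  have m2 : Measurable fun z : ℝ × ℝ => F z.2 * G z.1 :=
    (hFm.comp measurable_snd).mul (hGm.comp measurable_fst)
  have m3 : Measurable fun z : ℝ × ℝ => F z.1 * G z.1 :=
    (hFm.comp measurable_fst).mul (hGm.comp measurable_fst)
  have hle : ∫⁻ z, (F z.1 * G z.2 + F z.2 * G z.1) ∂P
      ≤ ∫⁻ z, (F z.1 * G z.1 + F z.2 * G z.2) ∂P := lintegral_mono key
  rw [lintegral_add_left m1, lintegral_add_left m3] at hle
  have e1 : ∫⁻ z, F z.1 * G z.2 ∂P = (∫⁻ x, F x ∂ν) * ∫⁻ x, G x ∂ν :=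
    lintegral_prod_mul hFm.aemeasurable hGm.aemeasurable
  have e2 : ∫⁻ z, F z.2 * G z.1 ∂P = (∫⁻ x, F x ∂ν) * ∫⁻ x, G x ∂ν := by
    simp_rw [mul_comm (F _)]
    rw [lintegral_prod_mul hGm.aemeasurable hFm.aemeasurable, mul_comm]
  have e3 : ∫⁻ z, F z.1 * G z.1 ∂P = ∫⁻ x, F x * G x ∂ν := by
    rw [lintegral_prod _ m3.aemeasurable]
    simp [lintegral_const]
  have e4 : ∫⁻ z, F z.2 * G z.2 ∂P = ∫⁻ x, F x * G x ∂ν := by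
    have m4 : Measurable fun z : ℝ × ℝ => F z.2 * G z.2 :=
      (hFm.comp measurable_snd).mul (hGm.comp measurable_snd)
    rw [lintegral_prod _ m4.aemeasurable]
    simp [lintegral_const]
  rw [e1, e2, e3, e4, ← two_mul, ← two_mul] at hle
  exact (ENNReal.mul_le_mul_iff_right two_ne_zero ENNReal.ofNat_ne_top).mp hle

lemma Fin.insertNth_mono {n : ℕ} {α : Fin (n+1) → Type*} [∀ i, Preorder (α i)]
    {i : Fin (n+1)} {a b : α i} {p q : ∀ j, α (i.succAbove j)}
    (hab : a ≤ b) (hpq : p ≤ q) : i.insertNth a p ≤ i.insertNth b q := by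
  rw [Fin.insertNth_le_iff]
  constructor
  · simpa using hab
  · intro j; simpa using hpq j

lemma harris_pi (ν : Measure ℝ) [IsProbabilityMeasure ν] :
    ∀ (n : ℕ) (f g : (Fin n → ℝ) → ℝ≥0∞), Antitone f → Antitone g →
      Measurable f → Measurable g →
      (∫⁻ x, f x ∂(Measure.pi fun _ : Fin n => ν)) * (∫⁻ x, g x ∂(Measure.pi fun _ : Fin n => ν))
        ≤ ∫⁻ x, f x * g x ∂(Measure.pi fun _ : Fin n => ν) := by
  intro n
  induction n with
  | zero =>
    intro f g hf hg hfm hgm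
    have hfc : f = fun _ => f default := funext fun x => congrArg f (Subsingleton.elim _ _)
    have hgc : g = fun _ => g default := funext fun x => congrArg g (Subsingleton.elim _ _)
    rw [hfc, hgc]
    simp [lintegral_const]
  | succ n IH =>
    intro f g hf hg hfm hgm
    set μn := Measure.pi fun _ : Fin n => ν with hμn
    set e := MeasurableEquiv.piFinSuccAbove (fun _ : Fin (n+1) => ℝ) 0 with he
    have MP : MeasurePreserving e.symm (ν.prod μn) (Measure.pi fun _ : Fin (n+1) => ν) :=
      (measurePreserving_piFinSuccAbove (fun _ : Fin (n+1) => ν) 0).symm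
    set ins : ℝ → (Fin n → ℝ) → (Fin (n+1) → ℝ) :=
      fun a xs => Fin.insertNth (α := fun _ : Fin (n+1) => ℝ) 0 a xs with hins
    have hes : ∀ z : ℝ × (Fin n → ℝ), e.symm z = ins z.1 z.2 := by
      intro z; rfl
    have hcomp : ∀ (φ : (Fin (n+1) → ℝ) → ℝ≥0∞), Measurable φ →
        ∫⁻ x, φ x ∂(Measure.pi fun _ : Fin (n+1) => ν)
          = ∫⁻ a, ∫⁻ xs, φ (ins a xs) ∂μn ∂ν := by
      intro φ hφ
      rw [← MP.lintegral_comp hφ]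
      rw [lintegral_prod (fun z => φ (e.symm z)) ((hφ.comp e.symm.measurable).aemeasurable)]
      simp only [hes]
    have hinsm : ∀ a : ℝ, Measurable (ins a) := by
      intro a
      have : ins a = fun xs => e.symm (a, xs) := by funext xs; rw [hes (a, xs)]
      rw [this]
      exact e.symm.measurable.comp (measurable_const.prodMk measurable_id)
    set F := fun a : ℝ => ∫⁻ xs, f (ins a xs) ∂μn with hF
    set G := fun a : ℝ => ∫⁻ xs, g (ins a xs) ∂μn with hG
    have hFant : Antitone F := fun a b hab =>
      lintegral_mono fun xs => hf (Fin.insertNth_mono hab le_rfl)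
    have hGant : Antitone G := fun a b hab =>
      lintegral_mono fun xs => hg (Fin.insertNth_mono hab le_rfl)
    have hFmeas : Measurable F := by
      have : Measurable fun z : ℝ × (Fin n → ℝ) => f (e.symm z) := hfm.comp e.symm.measurable
      simpa only [hes] using this.lintegral_prod_right'
    have hGmeas : Measurable G := by
      have : Measurable fun z : ℝ × (Fin n → ℝ) => g (e.symm z) := hgm.comp e.symm.measurable
      simpa only [hes] using this.lintegral_prod_right'
    have step1 : (∫⁻ x, f x ∂(Measure.pi fun _ : Fin (n+1) => ν)) = ∫⁻ a, F a ∂ν :=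
      hcomp f hfm
    have step2 : (∫⁻ x, g x ∂(Measure.pi fun _ : Fin (n+1) => ν)) = ∫⁻ a, G a ∂ν :=
      hcomp g hgm
    have step3 : ∫⁻ x, f x * g x ∂(Measure.pi fun _ : Fin (n+1) => ν)
        = ∫⁻ a, ∫⁻ xs, f (ins a xs) * g (ins a xs) ∂μn ∂ν :=
      hcomp _ (hfm.mul hgm)
    have inner : ∀ a : ℝ, F a * G a
        ≤ ∫⁻ xs, f (ins a xs) * g (ins a xs) ∂μn := by
      intro a
      exact IH _ _ (fun p q hpq => hf (Fin.insertNth_mono le_rfl hpq))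
        (fun p q hpq => hg (Fin.insertNth_mono le_rfl hpq))
        (hfm.comp (hinsm a)) (hgm.comp (hinsm a))
    calc (∫⁻ x, f x ∂_) * (∫⁻ x, g x ∂_) = (∫⁻ a, F a ∂ν) * ∫⁻ a, G a ∂ν := by
          rw [step1, step2]
      _ ≤ ∫⁻ a, F a * G a ∂ν := harris_one ν hFant hGant hFmeas hGmeas
      _ ≤ ∫⁻ a, ∫⁻ xs, f (ins a xs) * g (ins a xs) ∂μn ∂ν :=
          lintegral_mono inner
      _ = _ := step3.symm

lemma indicator_antitone {α : Type*} [Preorder α] {A : Set α} (hA : IsLowerSet A) :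
    Antitone (A.indicator (1 : α → ℝ≥0∞)) := by
  intro x y hxy
  by_cases hy : y ∈ A
  · simp [Set.indicator_of_mem hy, Set.indicator_of_mem (hA hxy hy)]
  · simp [Set.indicator_of_notMem hy]

lemma harris_sets (ν : Measure ℝ) [IsProbabilityMeasure ν] (n : ℕ)
    (s : Finset ℕ) (A : ℕ → Set (Fin n → ℝ))
    (hlow : ∀ j ∈ s, IsLowerSet (A j)) (hms : ∀ j ∈ s, MeasurableSet (A j)) :
    ∏ j ∈ s, (Measure.pi fun _ : Fin n => ν) (A j)
      ≤ (Measure.pi fun _ : Fin n => ν) (⋂ j ∈ s, A j) := by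
  classical
  induction s using Finset.induction_on with
  | empty => simp
  | @insert a t ha IH =>
    have hlow' : ∀ j ∈ t, IsLowerSet (A j) := fun j hj => hlow j (Finset.mem_insert_of_mem hj)
    have hms' : ∀ j ∈ t, MeasurableSet (A j) := fun j hj => hms j (Finset.mem_insert_of_mem hj)
    have hlowI : IsLowerSet (⋂ j ∈ t, A j) := by
      intro x y hxy hx
      simp only [Set.mem_iInter] at hx ⊢
      exact fun j hj => hlow' j hj hxy (hx j hj)
    have hmsI : MeasurableSet (⋂ j ∈ t, A j) :=
      MeasurableSet.biInter (Finset.countable_toSet t) (fun j hj => hms' j hj)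
    have hmsa : MeasurableSet (A a) := hms a (Finset.mem_insert_self a t)
    have hlowa : IsLowerSet (A a) := hlow a (Finset.mem_insert_self a t)
    have hH := harris_pi ν n ((A a).indicator 1) ((⋂ j ∈ t, A j).indicator 1)
      (indicator_antitone hlowa) (indicator_antitone hlowI)
      (measurable_one.indicator hmsa) (measurable_one.indicator hmsI)
    rw [lintegral_indicator_one hmsa, lintegral_indicator_one hmsI] at hH
    have hmul : (fun x => (A a).indicator (1 : (Fin n → ℝ) → ℝ≥0∞) x
          * (⋂ j ∈ t, A j).indicator (1 : (Fin n → ℝ) → ℝ≥0∞) x)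
        = ((A a) ∩ ⋂ j ∈ t, A j).indicator (1 : (Fin n → ℝ) → ℝ≥0∞) := by
      rw [Set.inter_indicator_one]; rfl
    rw [show (∫⁻ x, (A a).indicator 1 x * (⋂ j ∈ t, A j).indicator 1 x
          ∂(Measure.pi fun _ : Fin n => ν))
        = ∫⁻ x, ((A a) ∩ ⋂ j ∈ t, A j).indicator 1 x ∂(Measure.pi fun _ : Fin n => ν) from by
      rw [← hmul], lintegral_indicator_one (hmsa.inter hmsI)] at hH
    rw [Finset.prod_insert ha, Finset.set_biInter_insert]
    exact le_trans (mul_le_mul_right (IH hlow' hms') _) hH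

open ProbabilityTheory in
lemma joint_law {Ω : Type*} [MeasurableSpace Ω] (Pr : Measure Ω) [IsProbabilityMeasure Pr]
    (y : ℕ → Ω → ℝ) (hmeas : ∀ i, Measurable (y i))
    (hindep : iIndepFun y Pr)
    (hident : ∀ i, Measure.map (y i) Pr = Measure.map (y 1) Pr)
    {k : ℕ} (g : Fin k → ℕ) (hg : Function.Injective g) :
    Measure.map (fun ω j => y (g j) ω) Pr
      = Measure.pi (fun _ : Fin k => Measure.map (y 1) Pr) := by
  classical
  refine (Measure.pi_eq fun s hs => ?_).symm
  have hJm : Measurable (fun ω (j : Fin k) => y (g j) ω) :=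
    measurable_pi_lambda _ fun j => hmeas (g j)
  rw [Measure.map_apply hJm (MeasurableSet.univ_pi hs)]
  set sets : ℕ → Set ℝ := fun i => if h : ∃ j, g j = i then s h.choose else Set.univ with hsets0
  have hsets : ∀ j, sets (g j) = s j := by
    intro j
    have h : ∃ j', g j' = g j := ⟨j, rfl⟩
    have : h.choose = j := hg h.choose_spec
    simp only [hsets0, dif_pos h, this]
  have hmsets : ∀ i ∈ Finset.image g Finset.univ, MeasurableSet (sets i) := by
    intro i _
    by_cases h : ∃ j, g j = i
    · simp only [hsets0, dif_pos h]; exact hs _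
    · simp only [hsets0, dif_neg h]; exact MeasurableSet.univ
  have hkey := hindep.measure_inter_preimage_eq_mul (Finset.image g Finset.univ) hmsets
  have h1 : (⋂ i ∈ Finset.image g Finset.univ, y i ⁻¹' sets i)
      = (fun ω (j : Fin k) => y (g j) ω) ⁻¹' Set.pi Set.univ s := by
    ext x
    simp only [Set.mem_iInter, Finset.mem_image, Finset.mem_univ, true_and, Set.mem_preimage,
      Set.mem_pi, Set.mem_univ, forall_true_left]
    constructor
    · intro H j
      have := H (g j) ⟨j, rfl⟩
      rwa [hsets j] at this
    · rintro H i ⟨j, rfl⟩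
      rw [hsets j]; exact H j
  have h2 : ∏ i ∈ Finset.image g Finset.univ, Pr (y i ⁻¹' sets i)
      = ∏ j : Fin k, Pr (y (g j) ⁻¹' s j) := by
    rw [Finset.prod_image (fun a _ b _ hab => hg hab)]
    exact Finset.prod_congr rfl fun j _ => by rw [hsets j]
  rw [h1, h2] at hkey
  rw [hkey]
  refine Finset.prod_congr rfl fun j _ => ?_
  rw [← hident (g j), Measure.map_apply (hmeas (g j)) (hs j)]

lemma Icc_map_fin (c m : ℕ) (hm : 1 ≤ m) :
    Finset.Icc c (c + m - 1) =
      Finset.map ⟨fun j : Fin m => c + (j : ℕ), by intro a b hab; exact Fin.ext (by have h' : c + (a:ℕ) = c + (b:ℕ) := hab; omega)⟩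
        Finset.univ := by
  ext i
  simp only [Finset.mem_Icc, Finset.mem_map, Finset.mem_univ, true_and,
    Function.Embedding.coeFn_mk]
  constructor
  · rintro ⟨h1, h2⟩
    exact ⟨⟨i - c, by omega⟩, by show c + (i - c) = i; omega⟩
  · rintro ⟨j, rfl⟩
    have := j.isLt; show c ≤ c + (j : ℕ) ∧ c + (j : ℕ) ≤ c + m - 1; omega

open ProbabilityTheory in
lemma movSum_law {Ω : Type*} [MeasurableSpace Ω] (Pr : Measure Ω) [IsProbabilityMeasure Pr]
    (m : ℕ) (hm : 1 ≤ m) (y : ℕ → Ω → ℝ) (hmeas : ∀ i, Measurable (y i))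
    (hindep : iIndepFun y Pr)
    (hident : ∀ i, Measure.map (y i) Pr = Measure.map (y 1) Pr)
    (h : ℝ) (n : ℕ) (hmn : m ≤ n) :
    Pr {ω | movSum m y n ω < h}
      = (Measure.pi fun _ : Fin m => Measure.map (y 1) Pr)
          {x : Fin m → ℝ | ∑ j, x j < h} := by
  have : IsProbabilityMeasure (Measure.map (y 1) Pr) :=
    Measure.isProbabilityMeasure_map (hmeas 1).aemeasurable
  set c := n + 1 - m with hc
  have hcn : c + m - 1 = n := by omega
  have hsum : ∀ ω, movSum m y n ω = ∑ j : Fin m, y (c + (j : ℕ)) ω := by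
    intro ω
    rw [movSum, ← hc, ← hcn, Icc_map_fin c m hm, Finset.sum_map]
    rfl
  have hg : Function.Injective fun j : Fin m => c + (j : ℕ) := by
    intro a b hab
    exact Fin.ext (by have h' : c + (a:ℕ) = c + (b:ℕ) := hab; omega)
  have hB : MeasurableSet {x : Fin m → ℝ | ∑ j, x j < h} :=
    measurableSet_lt (Finset.measurable_sum _ fun i _ => measurable_pi_apply i) measurable_const
  have hJm : Measurable (fun ω (j : Fin m) => y (c + (j : ℕ)) ω) :=
    measurable_pi_lambda _ fun j => hmeas _
  have hpre : {ω | movSum m y n ω < h}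
      = (fun ω (j : Fin m) => y (c + (j : ℕ)) ω) ⁻¹' {x : Fin m → ℝ | ∑ j, x j < h} := by
    ext ω
    simp only [Set.mem_setOf_eq, Set.mem_preimage, hsum ω]
  rw [hpre, ← Measure.map_apply hJm hB,
    joint_law Pr y hmeas hindep hident _ hg]

/-- the worst-case false alarm probability is bounded by
`1 - Pr(S_m < h)^mα`. -/
theorem fma_false_alarm_bound {Ω : Type*} [MeasurableSpace Ω]
    (Pr : Measure Ω) [IsProbabilityMeasure Pr]
    (m : ℕ) (hm : 1 ≤ m) (mα : ℕ) (hmα : 1 ≤ mα) (y : ℕ → Ω → ℝ)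
    (hmeas : ∀ i, Measurable (y i))
    (hindep : iIndepFun y Pr)
    (hident : ∀ i, Measure.map (y i) Pr = Measure.map (y 1) Pr)
    (h : ℝ) :
    (⨆ (l : ℕ) (_ : 1 ≤ l),
        Pr {ω | (l : ℕ∞) ≤ fmaTime m y h ω ∧ fmaTime m y h ω < (l + mα : ℕ)})
      ≤ 1 - (Pr {ω | movSum m y m ω < h}) ^ mα := by
  classical
  have hν : IsProbabilityMeasure (Measure.map (y 1) Pr) :=
    Measure.isProbabilityMeasure_map (hmeas 1).aemeasurable
  set ν := Measure.map (y 1) Pr with hνdef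
  set p := Pr {ω | movSum m y m ω < h} with hpdef
  have hSmeas : ∀ n, Measurable fun ω => movSum m y n ω := fun n =>
    Finset.measurable_sum _ fun i _ => hmeas i
  refine iSup_le fun l => iSup_le fun hl => ?_
  set c := max l m with hcdef
  set d := l + mα - 1 with hddef
  have hd1 : d + 1 = l + mα := by omega
  set N := d + 1 with hNdef
  have hNpos : 0 < N := by omega
  -- the intersection event
  set E : Set Ω := ⋂ n ∈ Finset.Icc c d, {ω | movSum m y n ω < h} with hEdef
  have hmB : MeasurableSet E :=
    MeasurableSet.biInter (Finset.Icc c d).countable_toSet fun n _ =>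
      measurableSet_lt (hSmeas n) measurable_const
  have hsub : {ω | (l : ℕ∞) ≤ fmaTime m y h ω ∧ fmaTime m y h ω < ((l + mα : ℕ) : ℕ∞)} ⊆ Eᶜ := by
    rintro ω ⟨h1, h2⟩ hmem
    simp only [hEdef, Set.mem_iInter, Set.mem_setOf_eq] at hmem
    have hge : ((l + mα : ℕ) : ℕ∞) ≤ fmaTime m y h ω := by
      refine le_sInf ?_
      rintro b ⟨n, hn, rfl⟩
      by_contra hb
      push_neg at hb
      have hnlt : n < l + mα := by exact_mod_cast hb
      have hln : l ≤ n := by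
        have h3 : fmaTime m y h ω ≤ (n : ℕ∞) := sInf_le ⟨n, hn, rfl⟩
        exact_mod_cast le_trans h1 h3
      have hnIcc : n ∈ Finset.Icc c d :=
        Finset.mem_Icc.2 ⟨max_le hln hn.1, by omega⟩
      exact absurd hn.2 (not_le.2 (hmem n hnIcc))
    exact absurd h2 (not_lt.2 hge)
  refine le_trans (measure_mono hsub) ?_
  rw [prob_compl_eq_one_sub hmB]
  refine tsub_le_tsub_left ?_ 1
  -- pull back to the product space
  set g : Fin N → ℕ := fun j => (j : ℕ) with hgdef
  set J : Ω → Fin N → ℝ := fun ω j => y (g j) ω with hJdef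
  have hJm : Measurable J := measurable_pi_lambda _ fun j => hmeas _
  have hmap : Measure.map J Pr = Measure.pi (fun _ : Fin N => ν) :=
    joint_law Pr y hmeas hindep hident g Fin.val_injective
  set A : ℕ → Set (Fin N → ℝ) := fun n =>
    {x | ∑ i ∈ Finset.Icc (n + 1 - m) n, x ⟨i % N, Nat.mod_lt i hNpos⟩ < h} with hAdef
  have hlowA : ∀ n, IsLowerSet (A n) := by
    intro n x₁ x₂ hle hx
    simp only [hAdef, Set.mem_setOf_eq] at hx ⊢
    exact lt_of_le_of_lt (Finset.sum_le_sum fun i _ => hle _) hx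
  have hmsA : ∀ n, MeasurableSet (A n) := fun n =>
    measurableSet_lt (Finset.measurable_sum _ fun i _ =>
      measurable_pi_apply (⟨i % N, Nat.mod_lt i hNpos⟩ : Fin N)) measurable_const
  have hpre : ∀ n ∈ Finset.Icc c d, J ⁻¹' (A n) = {ω | movSum m y n ω < h} := by
    intro n hn
    have hnd : n ≤ d := (Finset.mem_Icc.1 hn).2
    ext ω
    simp only [Set.mem_preimage, hAdef, Set.mem_setOf_eq, movSum]
    have : ∑ i ∈ Finset.Icc (n + 1 - m) n, J ω ⟨i % N, Nat.mod_lt i hNpos⟩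
        = ∑ i ∈ Finset.Icc (n + 1 - m) n, y i ω := by
      refine Finset.sum_congr rfl fun i hi => ?_
      have hiN : i < N := by
        have := (Finset.mem_Icc.1 hi).2; omega
      simp only [hJdef, hgdef]
      congr 1
      exact Nat.mod_eq_of_lt hiN
    rw [this]
  have hμA : ∀ n ∈ Finset.Icc c d, (Measure.pi fun _ : Fin N => ν) (A n) = p := by
    intro n hn
    have hmn : m ≤ n := le_trans (le_max_right l m) (Finset.mem_Icc.1 hn).1
    rw [← hmap, Measure.map_apply hJm (hmsA n), hpre n hn,
      movSum_law Pr m hm y hmeas hindep hident h n hmn,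
      ← movSum_law Pr m hm y hmeas hindep hident h m le_rfl]
  have hEeq : Pr E = (Measure.pi fun _ : Fin N => ν) (⋂ n ∈ Finset.Icc c d, A n) := by
    have hJE : J ⁻¹' (⋂ n ∈ Finset.Icc c d, A n) = E := by
      rw [Set.preimage_iInter₂, hEdef]
      exact Set.iInter₂_congr hpre
    have hmsI : MeasurableSet (⋂ n ∈ Finset.Icc c d, A n) :=
      MeasurableSet.biInter (Finset.Icc c d).countable_toSet fun n _ => hmsA n
    calc Pr E = Pr (J ⁻¹' (⋂ n ∈ Finset.Icc c d, A n)) := by rw [hJE]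
      _ = Measure.map J Pr (⋂ n ∈ Finset.Icc c d, A n) := (Measure.map_apply hJm hmsI).symm
      _ = (Measure.pi fun _ : Fin N => ν) (⋂ n ∈ Finset.Icc c d, A n) := by rw [hmap]
  rw [hEeq]
  calc p ^ mα ≤ p ^ (Finset.Icc c d).card := by
        refine pow_le_pow_right_of_le_one' prob_le_one ?_
        rw [Nat.card_Icc]; omega
    _ = ∏ n ∈ Finset.Icc c d, (Measure.pi fun _ : Fin N => ν) (A n) :=
        (Finset.prod_eq_pow_card hμA).symm
    _ ≤ (Measure.pi fun _ : Fin N => ν) (⋂ n ∈ Finset.Icc c d, A n) :=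
        harris_sets ν N (Finset.Icc c d) A (fun n _ => hlowA n) (fun n _ => hmsA n)
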